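/- Fix integers p ≥ 1 and F ≥ 1 and a real ρ_min > 0. Let K[·] and K̂[·] be sequences of p×p complex matrices and set Δ[·] := K̂[·] - K[·]. Define the edge set ℰ := {(i,j) ∈ [p]×[p] : i ≠ j and K[f]_{i,j} ≠ 0 for some f}, and assume that ‖K_{i,j}[·]‖ ≥ ρ_min for every (i,j) ∈ ℰ. If ‖Δ‖₁ < ρ_min/2, then the thresholded edge estimate Ê(ρ_min/2) := {(i,j) ∈ [p]×[p] : i ≠ j and ‖K̂_{i,j}[·]‖ ≥ ρ_min/2} equals ℰ. (Exact recovery of the conditional independence graph by thresholding, condition (12).) -/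

import Mathlib

open Matrix
open scoped ComplexOrder

/-- Squared Frobenius norm of a single complex matrix. -/
noncomputable def frobSq {p : ℕ} (M : Matrix (Fin p) (Fin p) ℂ) : ℝ :=
  ∑ i, ∑ j, ‖M i j‖ ^ 2

/-- The norm ‖X_{i,j}[·]‖ of the (i,j) entry group of a matrix sequence. -/
noncomputable def entryNorm {p F : ℕ} (X : Fin F → Matrix (Fin p) (Fin p) ℂ)
    (i j : Fin p) : ℝ :=
  Real.sqrt ((1 / (F : ℝ)) * ∑ f, ‖X f i j‖ ^ 2)

/-- The ℓ₁-norm ‖X‖₁ of a matrix sequence. -/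
noncomputable def l1Norm {p F : ℕ} (X : Fin F → Matrix (Fin p) (Fin p) ℂ) : ℝ :=
  ∑ i, ∑ j, entryNorm X i j

/-- The inner product ⟨A[·],B[·]⟩ (real part). -/
noncomputable def seqInner {p F : ℕ} (A B : Fin F → Matrix (Fin p) (Fin p) ℂ) : ℝ :=
  (1 / (F : ℝ)) * ∑ f, ((A f * B f).trace).re

/-- A{X} = (1/F) ∑_f log det X[f]. -/
noncomputable def Afun {p F : ℕ} (X : Fin F → Matrix (Fin p) (Fin p) ℂ) : ℝ :=
  (1 / (F : ℝ)) * ∑ f, Real.log (((X f).det).re)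

/-- The constraint set 𝒞: sequences of Hermitian matrices with 0 ≺ X[f] ⪯ I. -/
def memC {p F : ℕ} (X : Fin F → Matrix (Fin p) (Fin p) ℂ) : Prop :=
  ∀ f, (X f).IsHermitian ∧ (X f).PosDef ∧
    ((1 : Matrix (Fin p) (Fin p) ℂ) - X f).PosSemidef

/-- The gLASSO objective J(X) = -A{X} + ⟨Ŝ,X⟩ + λ‖X‖₁. -/
noncomputable def glassoObj {p F : ℕ} (Shat : Fin F → Matrix (Fin p) (Fin p) ℂ)
    (lam : ℝ) (X : Fin F → Matrix (Fin p) (Fin p) ℂ) : ℝ :=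
  - Afun X + seqInner Shat X + lam * l1Norm X

-- X_𝒮[·]: the sequence restricted to the index set 𝒮.
open Classical in
noncomputable def restrictSeq {p F : ℕ} (S : Set (Fin p × Fin p))
    (X : Fin F → Matrix (Fin p) (Fin p) ℂ) : Fin F → Matrix (Fin p) (Fin p) ℂ :=
  fun f => Matrix.of fun i j => if (i, j) ∈ S then X f i j else 0

/-- Generalized support of a matrix sequence. -/
def gsupp {p F : ℕ} (X : Fin F → Matrix (Fin p) (Fin p) ℂ) : Set (Fin p × Fin p) :=
  {ij | ∃ f, X f ij.1 ij.2 ≠ 0}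


lemma entry_sqrt_triangle (F : ℕ) (v w : Fin F → ℂ) :
    Real.sqrt ((1 / (F : ℝ)) * ∑ f, ‖v f + w f‖ ^ 2) ≤
      Real.sqrt ((1 / (F : ℝ)) * ∑ f, ‖v f‖ ^ 2) +
      Real.sqrt ((1 / (F : ℝ)) * ∑ f, ‖w f‖ ^ 2) := by
  have key : ∀ u : Fin F → ℂ,
      Real.sqrt ((1 / (F : ℝ)) * ∑ f, ‖u f‖ ^ 2) =
        Real.sqrt (1 / (F : ℝ)) * ‖(WithLp.equiv 2 (Fin F → ℂ)).symm u‖ := by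
    intro u
    rw [EuclideanSpace.norm_eq, Real.sqrt_mul (by positivity)]
    rfl
  have hgoal : Real.sqrt ((1 / (F : ℝ)) * ∑ f, ‖v f + w f‖ ^ 2) =
      Real.sqrt ((1 / (F : ℝ)) * ∑ f, ‖(v + w) f‖ ^ 2) := rfl
  rw [hgoal, key, key, key]
  have htri : ‖(WithLp.equiv 2 (Fin F → ℂ)).symm (v + w)‖ ≤
      ‖(WithLp.equiv 2 (Fin F → ℂ)).symm v‖ + ‖(WithLp.equiv 2 (Fin F → ℂ)).symm w‖ := by
    rw [show (WithLp.equiv 2 (Fin F → ℂ)).symm (v + w) =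
      (WithLp.equiv 2 (Fin F → ℂ)).symm v + (WithLp.equiv 2 (Fin F → ℂ)).symm w from rfl]
    exact norm_add_le _ _
  calc Real.sqrt (1 / (F:ℝ)) * ‖(WithLp.equiv 2 (Fin F → ℂ)).symm (v + w)‖
      ≤ Real.sqrt (1 / (F:ℝ)) * (‖(WithLp.equiv 2 (Fin F → ℂ)).symm v‖ + ‖(WithLp.equiv 2 (Fin F → ℂ)).symm w‖) :=
        mul_le_mul_of_nonneg_left htri (Real.sqrt_nonneg _)
    _ = _ := by ring

lemma entryNorm_nonneg {p F : ℕ} (X : Fin F → Matrix (Fin p) (Fin p) ℂ) (i j : Fin p) :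
    0 ≤ entryNorm X i j := Real.sqrt_nonneg _

lemma entryNorm_le_l1Norm {p F : ℕ} (X : Fin F → Matrix (Fin p) (Fin p) ℂ) (i j : Fin p) :
    entryNorm X i j ≤ l1Norm X := by
  unfold l1Norm
  calc entryNorm X i j ≤ ∑ j', entryNorm X i j' :=
        Finset.single_le_sum (f := fun j' => entryNorm X i j')
          (fun _ _ => entryNorm_nonneg X i _) (Finset.mem_univ j)
    _ ≤ ∑ i', ∑ j', entryNorm X i' j' :=
        Finset.single_le_sum (f := fun i' => ∑ j', entryNorm X i' j')
          (fun i' _ => Finset.sum_nonneg fun _ _ => entryNorm_nonneg X i' _)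
          (Finset.mem_univ i)

/-- exact recovery of the conditional independence graph by
thresholding, condition (12). -/
theorem stmt_13 (p F : ℕ) (hp : 1 ≤ p) (hF : 1 ≤ F) (ρmin : ℝ) (hρ : 0 < ρmin)
    (K Khat : Fin F → Matrix (Fin p) (Fin p) ℂ)
    (E : Set (Fin p × Fin p))
    (hE : E = {ij | ij.1 ≠ ij.2 ∧ ∃ f, K f ij.1 ij.2 ≠ 0})
    (hmin : ∀ ij ∈ E, ρmin ≤ entryNorm K ij.1 ij.2)
    (hΔ : l1Norm (fun f => Khat f - K f) < ρmin / 2) :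
    {ij : Fin p × Fin p | ij.1 ≠ ij.2 ∧ ρmin / 2 ≤ entryNorm Khat ij.1 ij.2} = E := by
  set Δ : Fin F → Matrix (Fin p) (Fin p) ℂ := fun f => Khat f - K f with hΔdef
  have hΔsmall : ∀ i j : Fin p, entryNorm Δ i j < ρmin / 2 := fun i j =>
    lt_of_le_of_lt (entryNorm_le_l1Norm Δ i j) hΔ
  have hKhat : ∀ f (i j : Fin p), Khat f i j = K f i j + Δ f i j := by
    intro f i j; simp [hΔdef, Matrix.sub_apply]
  ext ij
  obtain ⟨i, j⟩ := ij
  simp only [Set.mem_setOf_eq, hE]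
  constructor
  · rintro ⟨hne, hge⟩
    refine ⟨hne, ?_⟩
    by_contra hz
    push_neg at hz
    have hzero : ∀ f, K f i j = 0 := hz
    have : entryNorm Khat i j = entryNorm Δ i j := by
      unfold entryNorm
      congr 1
      congr 1
      apply Finset.sum_congr rfl
      intro f _
      rw [hKhat f i j, hzero f, zero_add]
    rw [this] at hge
    exact absurd hge (not_le.mpr (hΔsmall i j))
  · rintro ⟨hne, hex⟩
    refine ⟨hne, ?_⟩
    have hmem : (i, j) ∈ E := by rw [hE]; exact ⟨hne, hex⟩
    have hK := hmin (i, j) hmem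
    have htri : entryNorm K i j ≤ entryNorm Khat i j + entryNorm (fun f => - Δ f) i j := by
      have := entry_sqrt_triangle F (fun f => Khat f i j) (fun f => - Δ f i j)
      have heq : ∀ f, Khat f i j + - Δ f i j = K f i j := by
        intro f; rw [hKhat f i j]; ring
      unfold entryNorm
      convert this using 4 <;> simp [heq]
    have hnegΔ : entryNorm (fun f => - Δ f) i j = entryNorm Δ i j := by
      unfold entryNorm; simp
    rw [hnegΔ] at htri
    have := hΔsmall i j
    linarith
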